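/- Let 0 < ρ < π, ε > 0 and C > 0, and let ψ be a holomorphic function on the open sector Σ_ρ = {z ∈ ℂ ∖ {0} : |arg z| < ρ} satisfying |ψ(z)| ≤ C · min(|z|^ε, |z|^{−ε}) for all z ∈ Σ_ρ. Then for every σ ∈ ℝ the integral ∫₀^∞ t^{iσ−1} ψ(t) dt converges absolutely and |∫₀^∞ t^{iσ−1} ψ(t) dt| ≤ (2C/ε) · e^{−ρ|σ|}. -/

import Mathlib

/- STATEMENT 13: decay of the Mellin transform along the imaginary axis of a function
holomorphic on a sector `Σ_ρ` with polynomial decay at `0` and `∞`: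
`|∫₀^∞ t^{iσ−1} ψ(t) dt| ≤ (2C/ε) e^{−ρ|σ|}`. -/

open MeasureTheory

namespace Stmt13Aux

open Set Complex Filter

lemma aux_abs_exp (σ : ℝ) (w : ℂ) :
    ‖Complex.exp (Complex.I * σ * w)‖ = Real.exp (-(σ * w.im)) := by
  rw [Complex.norm_exp]; congr 1; simp [Complex.mul_re, Complex.mul_im]

lemma aux_arg_cexp {w : ℂ} (h : |w.im| < Real.pi) : Complex.arg (Complex.exp w) = w.im := by
  obtain ⟨h1, h2⟩ := abs_lt.mp h
  rw [← Complex.re_add_im w, Complex.exp_add, ← Complex.ofReal_exp]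
  rw [Complex.arg_real_mul _ (Real.exp_pos _), Complex.exp_mul_I]
  rw [← Complex.ofReal_cos, ← Complex.ofReal_sin]
  simpa using Complex.arg_cos_add_sin_mul_I ⟨h1, h2.le⟩

lemma aux_isOpen_sector {ρ : ℝ} (hρπ : ρ < Real.pi) :
    IsOpen {z : ℂ | z ≠ 0 ∧ |Complex.arg z| < ρ} := by
  have h : {z : ℂ | z ≠ 0 ∧ |Complex.arg z| < ρ}
      = Complex.slitPlane ∩ Complex.arg ⁻¹' (Set.Ioo (-ρ) ρ) := by
    ext z
    simp only [Set.mem_setOf_eq, Set.mem_inter_iff, Set.mem_preimage, Set.mem_Ioo, ← abs_lt]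
    constructor
    · rintro ⟨hz, ha⟩
      refine ⟨?_, ha⟩
      rw [Complex.mem_slitPlane_iff]
      by_contra hcon
      push_neg at hcon
      have hre : z.re < 0 := lt_of_le_of_ne hcon.1 (by
        intro h0
        exact hz (Complex.ext h0 hcon.2))
      have : Complex.arg z = Real.pi := Complex.arg_eq_pi_iff.mpr ⟨hre, hcon.2⟩
      rw [this, abs_of_pos Real.pi_pos] at ha
      linarith
    · rintro ⟨hz, ha⟩
      refine ⟨?_, ha⟩
      rintro rfl
      simp [Complex.mem_slitPlane_iff] at hz
  rw [h]
  exact ContinuousOn.isOpen_inter_preimage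
    (fun z hz => (Complex.continuousAt_arg hz).continuousWithinAt)
    Complex.isOpen_slitPlane isOpen_Ioo

lemma aux_integrable_exp_abs {ε : ℝ} (hε : 0 < ε) :
    Integrable (fun u : ℝ => Real.exp (-(ε * |u|))) := by
  have h1 : IntegrableOn (fun u : ℝ => Real.exp (-(ε * |u|))) (Ioi 0) := by
    refine (exp_neg_integrableOn_Ioi 0 hε).congr_fun (fun x hx => ?_) measurableSet_Ioi
    rw [abs_of_pos hx, ← neg_mul]
  have h2 : IntegrableOn (fun u : ℝ => Real.exp (-(ε * |u|))) (Iic 0) := by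
    rw [← Measure.map_neg_eq_self (volume : Measure ℝ)]
    have m : MeasurableEmbedding fun x : ℝ => -x := (Homeomorph.neg ℝ).measurableEmbedding
    rw [m.integrableOn_map_iff]
    simp_rw [Function.comp_def, abs_neg, neg_preimage, neg_Iic, neg_zero]
    exact Iff.mpr integrableOn_Ici_iff_integrableOn_Ioi h1
  have := h2.union h1
  rwa [Iic_union_Ioi, integrableOn_univ] at this

lemma aux_integral_exp_abs {ε : ℝ} (hε : 0 < ε) :
    ∫ u : ℝ, Real.exp (-(ε * |u|)) = 2 / ε := by
  have h0 : ∫ u : ℝ, Real.exp (-(ε * |u|)) = 2 * ∫ u in Ioi (0:ℝ), Real.exp (-(ε * u)) := by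
    rw [← integral_comp_abs (f := fun u => Real.exp (-(ε * u)))]
  rw [h0]
  have : ∫ u in Ioi (0:ℝ), Real.exp (-(ε * u)) = ε⁻¹ • ∫ x in Ioi (ε * 0), Real.exp (-x) :=
    integral_comp_mul_left_Ioi (fun x => Real.exp (-x)) 0 hε
  rw [this, mul_zero, integral_exp_neg_Ioi, smul_eq_mul]
  rw [neg_zero, Real.exp_zero]
  field_simp

end Stmt13Aux

open Stmt13Aux Set Complex Filter in
theorem stmt_13 (ρ ε C : ℝ) (hρ0 : 0 < ρ) (hρπ : ρ < Real.pi) (hε : 0 < ε) (hC : 0 < C)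
    (ψ : ℂ → ℂ)
    (hψan : DifferentiableOn ℂ ψ {z : ℂ | z ≠ 0 ∧ |Complex.arg z| < ρ})
    (hψbd : ∀ z : ℂ, z ≠ 0 → |Complex.arg z| < ρ →
      ‖ψ z‖ ≤ C * min (‖z‖ ^ ε) (‖z‖ ^ (-ε)))
    (σ : ℝ) :
    IntegrableOn (fun t : ℝ => (t : ℂ) ^ (Complex.I * (σ : ℂ) - 1) * ψ (t : ℂ))
      (Set.Ioi 0) ∧
    ‖∫ t in Set.Ioi (0 : ℝ), (t : ℂ) ^ (Complex.I * (σ : ℂ) - 1) * ψ (t : ℂ)‖ ≤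
      2 * C / ε * Real.exp (-ρ * |σ|) := by
  have hSopen : IsOpen {z : ℂ | z ≠ 0 ∧ |Complex.arg z| < ρ} := aux_isOpen_sector hρπ
  set g : ℂ → ℂ := fun w => Complex.exp (Complex.I * σ * w) * ψ (Complex.exp w) with hgdef
  have hmem : ∀ w : ℂ, |w.im| < ρ → Complex.exp w ∈ {z : ℂ | z ≠ 0 ∧ |Complex.arg z| < ρ} :=
    fun w hw => ⟨Complex.exp_ne_zero w, by rw [aux_arg_cexp (hw.trans hρπ)]; exact hw⟩
  have hdiff : ∀ w : ℂ, |w.im| < ρ → DifferentiableAt ℂ g w := by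
    intro w hw
    have h1 : DifferentiableAt ℂ ψ (Complex.exp w) :=
      hψan.differentiableAt (hSopen.mem_nhds (hmem w hw))
    have h2 : DifferentiableAt ℂ (fun w : ℂ => Complex.exp (Complex.I * σ * w)) w :=
      Complex.differentiable_exp.differentiableAt.comp w
        ((differentiable_id.const_mul _).differentiableAt)
    exact h2.mul (h1.comp w Complex.differentiable_exp.differentiableAt)
  have hbound : ∀ w : ℂ, |w.im| < ρ →
      ‖g w‖ ≤ C * Real.exp (-(σ * w.im)) * Real.exp (-(ε * |w.re|)) := by
    intro w hw
    have h := hψbd (Complex.exp w) (Complex.exp_ne_zero w)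
      (by rw [aux_arg_cexp (hw.trans hρπ)]; exact hw)
    rw [Complex.norm_exp] at h
    have hmin : min (Real.exp w.re ^ ε) (Real.exp w.re ^ (-ε)) = Real.exp (-(ε * |w.re|)) := by
      rw [Real.rpow_def_of_pos (Real.exp_pos _), Real.rpow_def_of_pos (Real.exp_pos _),
        Real.log_exp]
      rcases le_total 0 w.re with h0 | h0
      · rw [min_eq_right (Real.exp_le_exp.mpr (by nlinarith)), _root_.abs_of_nonneg h0]
        congr 1; ring
      · rw [min_eq_left (Real.exp_le_exp.mpr (by nlinarith)), _root_.abs_of_nonpos h0]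
        congr 1; ring
    rw [hmin] at h
    calc ‖g w‖ = Real.exp (-(σ * w.im)) * ‖ψ (Complex.exp w)‖ := by
          rw [hgdef]; simp only [norm_mul, aux_abs_exp]
      _ ≤ Real.exp (-(σ * w.im)) * (C * Real.exp (-(ε * |w.re|))) :=
          mul_le_mul_of_nonneg_left h (Real.exp_pos _).le
      _ = C * Real.exp (-(σ * w.im)) * Real.exp (-(ε * |w.re|)) := by ring
  -- integrability along horizontal lines
  have hIntθ : ∀ θ : ℝ, |θ| < ρ → Integrable (fun u : ℝ => g (u + θ * Complex.I)) := by
    intro θ hθ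
    have hline : ∀ u : ℝ, ((u : ℂ) + θ * Complex.I).im = θ ∧ ((u : ℂ) + θ * Complex.I).re = u :=
      fun u => by constructor <;> simp
    have hcont : Continuous (fun u : ℝ => g (u + θ * Complex.I)) := by
      refine continuous_iff_continuousAt.mpr (fun u => ?_)
      exact ((hdiff _ (by rw [(hline u).1]; exact hθ)).continuousAt).comp (by fun_prop)
    refine ((aux_integrable_exp_abs hε).const_mul (C * Real.exp (-(σ * θ)))).mono'
      hcont.aestronglyMeasurable ?_
    refine Filter.Eventually.of_forall (fun u => ?_)
    have hb := hbound _ (by rw [(hline u).1]; exact hθ)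
    rw [(hline u).1, (hline u).2] at hb
    exact le_of_le_of_eq hb (by ring)
  have hInt0 : Integrable (fun u : ℝ => g u) := by
    have := hIntθ 0 (by simpa using hρ0)
    simpa using this
  -- the contour shift
  have hInteq : ∀ θ : ℝ, |θ| < ρ →
      ∫ u : ℝ, g u = ∫ u : ℝ, g (u + θ * Complex.I) := by
    intro θ hθ
    set V : ℝ → ℂ := fun s => ∫ y in (0:ℝ)..θ, g (s + y * Complex.I) with hV
    have hVbd : ∀ s : ℝ, ‖V s‖ ≤ C * Real.exp (|σ| * |θ|) * Real.exp (-(ε * |s|)) * |θ| := by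
      intro s
      have := intervalIntegral.norm_integral_le_of_norm_le_const
        (C := C * Real.exp (|σ| * |θ|) * Real.exp (-(ε * |s|)))
        (f := fun y : ℝ => g (s + y * Complex.I)) (a := (0:ℝ)) (b := θ) ?_
      · simpa using this
      · intro y hy
        have hyθ : |y| ≤ |θ| := by
          rcases Set.mem_uIoc.mp hy with ⟨h3, h4⟩ | ⟨h3, h4⟩
          · rw [_root_.abs_of_pos h3]; exact h4.trans (le_abs_self θ)
          · rw [_root_.abs_of_nonpos h4]
            calc -y ≤ -θ := by linarith
              _ ≤ |θ| := neg_le_abs θ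
        have him : ((s : ℂ) + y * Complex.I).im = y := by simp
        have hre : ((s : ℂ) + y * Complex.I).re = s := by simp
        have hb := hbound _ (by rw [him]; exact lt_of_le_of_lt hyθ hθ)
        rw [him, hre] at hb
        refine hb.trans ?_
        have : Real.exp (-(σ * y)) ≤ Real.exp (|σ| * |θ|) := by
          apply Real.exp_le_exp.mpr
          calc -(σ * y) ≤ |σ * y| := neg_le_abs _
            _ = |σ| * |y| := abs_mul σ y
            _ ≤ |σ| * |θ| := by gcongr
        exact mul_le_mul_of_nonneg_right (mul_le_mul_of_nonneg_left this hC.le)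
          (Real.exp_pos _).le
    have h1 : Tendsto (fun R : ℝ => ε * |R|) atTop atTop :=
      tendsto_abs_atTop_atTop.const_mul_atTop hε
    have he : Tendsto (fun R : ℝ => Real.exp (-(ε * |R|))) atTop (nhds 0) :=
      Real.tendsto_exp_atBot.comp (tendsto_neg_atTop_atBot.comp h1)
    have hb0 : Tendsto (fun R : ℝ => C * Real.exp (|σ| * |θ|) * Real.exp (-(ε * |R|)) * |θ|)
        atTop (nhds 0) := by
      have := (he.const_mul (C * Real.exp (|σ| * |θ|))).mul_const |θ|
      simpa using this
    have hVz : Tendsto (fun R : ℝ => V R) atTop (nhds 0) :=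
      squeeze_zero_norm (fun R => hVbd R) hb0
    have hVz' : Tendsto (fun R : ℝ => V (-R)) atTop (nhds 0) :=
      squeeze_zero_norm (fun R => by simpa using hVbd (-R)) hb0
    have key : ∀ R : ℝ, (∫ x in -R..R, g x)
        = (∫ x in -R..R, g (x + θ * Complex.I)) + (Complex.I • V (-R) - Complex.I • V R) := by
      intro R
      have hd : DifferentiableOn ℂ g
          (Set.uIcc (Complex.ofReal (-R)).re (Complex.ofReal R + Complex.ofReal θ * Complex.I).re
            ×ℂ Set.uIcc (Complex.ofReal (-R)).im
              (Complex.ofReal R + Complex.ofReal θ * Complex.I).im) := by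
        intro x hx
        rw [Complex.mem_reProdIm] at hx
        refine (hdiff x ?_).differentiableWithinAt
        have h2 := hx.2
        simp only [Complex.add_im, Complex.ofReal_im, Complex.mul_im, Complex.ofReal_re,
          Complex.I_im, Complex.I_re, mul_zero, mul_one, zero_add, zero_mul, add_zero] at h2
        have hyθ : |x.im| ≤ |θ| := by
          rcases Set.mem_uIcc.mp h2 with ⟨h3, h4⟩ | ⟨h3, h4⟩
          · rw [_root_.abs_of_nonneg h3]; exact h4.trans (le_abs_self θ)
          · rw [_root_.abs_of_nonpos h4]
            calc -x.im ≤ -θ := by linarith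
              _ ≤ |θ| := neg_le_abs θ
        exact lt_of_le_of_lt hyθ hθ
      have kk := Complex.integral_boundary_rect_eq_zero_of_differentiableOn g
        (Complex.ofReal (-R)) (Complex.ofReal R + Complex.ofReal θ * Complex.I) hd
      simp only [Complex.add_re, Complex.add_im, Complex.ofReal_re, Complex.ofReal_im,
        Complex.mul_re, Complex.mul_im, Complex.I_re, Complex.I_im, mul_zero, mul_one,
        zero_mul, sub_zero, add_zero, zero_add, Complex.ofReal_zero, Complex.ofReal_neg,
        Complex.neg_re, Complex.neg_im, neg_zero] at kk
      rw [hV]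
      rw [smul_eq_mul, smul_eq_mul] at kk ⊢
      push_cast at kk ⊢
      linear_combination kk
    have hA : Tendsto (fun R : ℝ => ∫ x in -R..R, g x) atTop (nhds (∫ u : ℝ, g u)) :=
      intervalIntegral_tendsto_integral hInt0 tendsto_neg_atTop_atBot tendsto_id
    have hB : Tendsto (fun R : ℝ => (∫ x in -R..R, g (x + θ * Complex.I))
          + (Complex.I • V (-R) - Complex.I • V R)) atTop
        (nhds (∫ u : ℝ, g (u + θ * Complex.I))) := by
      have := (intervalIntegral_tendsto_integral (hIntθ θ hθ) tendsto_neg_atTop_atBot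
        tendsto_id).add ((hVz'.const_smul Complex.I).sub (hVz.const_smul Complex.I))
      simpa using this
    exact tendsto_nhds_unique hA (hB.congr (fun R => (key R).symm))
  -- the norm bound for each horizontal line
  have hnorm : ∀ θ : ℝ, |θ| < ρ → ‖∫ u : ℝ, g u‖ ≤ 2 * C / ε * Real.exp (-(σ * θ)) := by
    intro θ hθ
    rw [hInteq θ hθ]
    have hb : ‖∫ u : ℝ, g (u + θ * Complex.I)‖
        ≤ ∫ u : ℝ, C * Real.exp (-(σ * θ)) * Real.exp (-(ε * |u|)) := by
      refine norm_integral_le_of_norm_le ((aux_integrable_exp_abs hε).const_mul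
        (C * Real.exp (-(σ * θ)))) (Filter.Eventually.of_forall (fun u => ?_))
      have hline : ∀ u : ℝ, ((u : ℂ) + θ * Complex.I).im = θ ∧ ((u : ℂ) + θ * Complex.I).re = u :=
        fun u => by constructor <;> simp
      have hbb := hbound _ (by rw [(hline u).1]; exact hθ)
      rw [(hline u).1, (hline u).2] at hbb
      exact le_of_le_of_eq hbb (by ring)
    refine hb.trans ?_
    rw [integral_const_mul, aux_integral_exp_abs hε]
    apply le_of_eq
    ring
  -- substitution t = exp u
  have hsub : ∀ u : ℝ, |Real.exp u| • ((↑(Real.exp u) : ℂ) ^ (Complex.I * (σ:ℂ) - 1)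
      * ψ ↑(Real.exp u)) = g u := by
    intro u
    rw [_root_.abs_of_pos (Real.exp_pos u)]
    have h2 : ((Real.exp u : ℝ) : ℂ) ^ (Complex.I * (σ:ℂ) - 1)
        = Complex.exp ((u : ℂ) * (Complex.I * σ - 1)) := by
      rw [Complex.cpow_def_of_ne_zero (by exact_mod_cast (Real.exp_pos u).ne')]
      rw [← Complex.ofReal_log (Real.exp_pos u).le, Real.log_exp]
    rw [h2, hgdef]
    have h1 : ((Real.exp u : ℝ) : ℂ) = Complex.exp (u : ℂ) := Complex.ofReal_exp u
    rw [Complex.real_smul, h1]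
    rw [← mul_assoc, ← Complex.exp_add]
    congr 2
    ring
  have hderivaux : ∀ x ∈ (univ : Set ℝ), HasDerivWithinAt Real.exp (Real.exp x) univ x :=
    fun x _ => (Real.hasDerivAt_exp x).hasDerivWithinAt
  have himage : Real.exp '' univ = Ioi (0:ℝ) := by
    rw [image_univ, Real.range_exp]
  have hinj : InjOn Real.exp univ := Real.exp_injective.injOn
  have hint : IntegrableOn (fun t : ℝ => (t : ℂ) ^ (Complex.I * (σ : ℂ) - 1) * ψ (t : ℂ))
      (Set.Ioi 0) := by
    rw [← himage, integrableOn_image_iff_integrableOn_abs_deriv_smul MeasurableSet.univ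
      hderivaux hinj, integrableOn_univ]
    exact hInt0.congr (Filter.Eventually.of_forall fun u => (hsub u).symm)
  refine ⟨hint, ?_⟩
  have heq : (∫ t in Set.Ioi (0:ℝ), (t : ℂ) ^ (Complex.I * (σ : ℂ) - 1) * ψ (t : ℂ))
      = ∫ u : ℝ, g u := by
    rw [← himage, integral_image_eq_integral_abs_deriv_smul MeasurableSet.univ hderivaux hinj]
    rw [setIntegral_univ]
    exact integral_congr_ae (Filter.Eventually.of_forall fun u => hsub u)
  rw [heq]
  rcases le_or_gt 0 σ with hσ | hσ
  · have hρσ : -ρ * |σ| = -(σ * ρ) := by rw [_root_.abs_of_nonneg hσ]; ring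
    rw [hρσ]
    have htend : Tendsto (fun θ : ℝ => 2 * C / ε * Real.exp (-(σ * θ))) (nhdsWithin ρ (Iio ρ))
        (nhds (2 * C / ε * Real.exp (-(σ * ρ)))) := by
      apply Tendsto.mono_left _ nhdsWithin_le_nhds
      exact Continuous.tendsto (by fun_prop) ρ
    refine ge_of_tendsto htend ?_
    filter_upwards [Ioo_mem_nhdsLT_of_mem (show ρ ∈ Ioc (-ρ) ρ by constructor <;> linarith)]
      with θ hθ
    exact hnorm θ (abs_lt.mpr ⟨hθ.1, hθ.2⟩)
  · have hρσ : -ρ * |σ| = -(σ * (-ρ)) := by rw [abs_of_neg hσ]; ring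
    rw [hρσ]
    have htend : Tendsto (fun θ : ℝ => 2 * C / ε * Real.exp (-(σ * θ)))
        (nhdsWithin (-ρ) (Ioi (-ρ)))
        (nhds (2 * C / ε * Real.exp (-(σ * (-ρ))))) := by
      apply Tendsto.mono_left _ nhdsWithin_le_nhds
      exact Continuous.tendsto (by fun_prop) (-ρ)
    refine ge_of_tendsto htend ?_
    filter_upwards [Ioo_mem_nhdsGT_of_mem (show -ρ ∈ Ico (-ρ) ρ by constructor <;> linarith)]
      with θ hθ
    exact hnorm θ (abs_lt.mpr ⟨hθ.1, hθ.2⟩)
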